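/- Let F be a free group with basis 𝒜, and let w ∈ F be cyclically reduced with respect to 𝒜. If ℬ is another basis of F and B = BCC(𝒜,ℬ) is the bounded cancellation constant, then w = z x z⁻¹ where x is cyclically reduced with respect to ℬ and |z|_ℬ ≤ B. -/

import Mathlib

/-- A reduced word is cyclically reduced if its last letter is not the inverse
of its first letter. -/
def CyclRedWord {α : Type} (l : List (α × Bool)) : Prop :=
  ∀ p q, l.head? = some p → l.getLast? = some q → ¬ (q.1 = p.1 ∧ q.2 = !p.2)

namespace BCC7
open FreeGroup List

set_option linter.unusedSectionVars false

variable {γ : Type} [DecidableEq γ]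

def Rd : (γ × Bool) → (γ × Bool) → Prop := fun x y => ¬(x.1 = y.1 ∧ x.2 = !y.2)

def Reduced (L : List (γ × Bool)) : Prop := L.Chain' Rd

lemma reduce_eq_self : ∀ {L : List (γ × Bool)}, Reduced L → FreeGroup.reduce L = L := by
  intro L h
  induction L with
  | nil => rfl
  | cons x L ih =>
    have hL : Reduced L := h.tail
    rw [reduce.cons, ih hL]
    cases L with
    | nil => rfl
    | cons y t =>
      have : Rd x y := (List.isChain_cons_cons.mp h).1
      simp only [if_neg this]

lemma reduced_reduce (L : List (γ × Bool)) : Reduced (FreeGroup.reduce L) := by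
  induction L with
  | nil => exact List.isChain_nil
  | cons x L ih =>
    rw [reduce.cons]
    rcases h : FreeGroup.reduce L with _ | ⟨hd, tl⟩
    · exact List.isChain_singleton x
    · rw [h] at ih
      by_cases hc : x.1 = hd.1 ∧ x.2 = !hd.2
      · show Reduced (if x.1 = hd.1 ∧ x.2 = !hd.2 then tl else x :: hd :: tl)
        rw [if_pos hc]; exact ih.tail
      · show Reduced (if x.1 = hd.1 ∧ x.2 = !hd.2 then tl else x :: hd :: tl)
        rw [if_neg hc]; exact List.isChain_cons_cons.mpr ⟨hc, ih⟩

lemma reduced_toWord (x : FreeGroup γ) : Reduced (toWord x) := by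
  rw [← reduce_toWord]; exact reduced_reduce _

lemma toWord_mk_reduced {L : List (γ × Bool)} (h : Reduced L) : (mk L).toWord = L := by
  rw [toWord_mk, reduce_eq_self h]

lemma invRev_cons (x : γ × Bool) (L : List (γ × Bool)) :
    invRev (x :: L) = invRev L ++ [(x.1, !x.2)] := by
  simp [invRev]

lemma reduced_invRev {L : List (γ × Bool)} (h : Reduced L) : Reduced (invRev L) := by
  unfold Reduced invRev at *
  simp only [List.Chain'] at *
  rw [List.isChain_reverse, List.isChain_map]
  refine h.imp ?_
  rintro ⟨a1, a2⟩ ⟨b1, b2⟩ hab ⟨h1, h2⟩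
  exact hab ⟨h1.symm, by simpa using h2.symm⟩

def lcp {δ : Type} [DecidableEq δ] : List δ → List δ → ℕ
  | a :: u, b :: v => if a = b then lcp u v + 1 else 0
  | _, _ => 0

lemma lcp_nil_left {δ : Type} [DecidableEq δ] (l : List δ) : lcp [] l = 0 := by
  cases l <;> rfl

lemma lcp_nil_right {δ : Type} [DecidableEq δ] (l : List δ) : lcp l [] = 0 := by
  cases l <;> rfl

lemma lcp_cons {δ : Type} [DecidableEq δ] (a b : δ) (u v : List δ) :
    lcp (a :: u) (b :: v) = if a = b then lcp u v + 1 else 0 := rfl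

lemma lcp_comm {δ : Type} [DecidableEq δ] : ∀ (u v : List δ), lcp u v = lcp v u
  | [], v => by rw [lcp_nil_left, lcp_nil_right]
  | u, [] => by rw [lcp_nil_left, lcp_nil_right]
  | a :: u, b :: v => by
      rw [lcp_cons, lcp_cons, lcp_comm u v]
      by_cases h : a = b
      · rw [if_pos h, if_pos h.symm]
      · rw [if_neg h, if_neg (fun hh => h hh.symm)]

lemma lcp_self {δ : Type} [DecidableEq δ] : ∀ (u : List δ), lcp u u = u.length
  | [] => rfl
  | a :: u => by rw [lcp_cons, if_pos rfl, lcp_self u]; rfl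

lemma lcp_le_left {δ : Type} [DecidableEq δ] : ∀ (u v : List δ), lcp u v ≤ u.length
  | [], v => by rw [lcp_nil_left]; exact Nat.zero_le _
  | u, [] => by rw [lcp_nil_right]; exact Nat.zero_le _
  | a :: u, b :: v => by
      rw [lcp_cons]
      by_cases h : a = b
      · rw [if_pos h]; exact Nat.succ_le_succ (lcp_le_left u v)
      · rw [if_neg h]; exact Nat.zero_le _

lemma lcp_ultra {δ : Type} [DecidableEq δ] :
    ∀ (u v w : List δ), min (lcp u v) (lcp v w) ≤ lcp u w
  | [], v, w => by simp [lcp_nil_left]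
  | u, [], w => by simp [lcp_nil_left, lcp_nil_right]
  | u, v, [] => by simp [lcp_nil_right]
  | a :: u, b :: v, c :: w => by
      by_cases hab : a = b
      · by_cases hbc : b = c
        · rw [lcp_cons, lcp_cons, lcp_cons, if_pos hab, if_pos hbc, if_pos (hab.trans hbc)]
          have := lcp_ultra u v w
          omega
        · rw [lcp_cons b c, if_neg hbc]; simp
      · rw [lcp_cons a b, if_neg hab]; simp

lemma reduce_word_lemma : ∀ (A : List (γ × Bool)), ∀ {B : List (γ × Bool)},
    Reduced A → Reduced B →
    (FreeGroup.reduce (invRev A ++ B)).length + 2 * lcp A B = A.length + B.length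
  | [], B, _, hB => by
      rw [invRev_empty, List.nil_append, reduce_eq_self hB, lcp_nil_left]
      simp
  | a :: A', [], hA, _ => by
      rw [List.append_nil, reduce_eq_self (reduced_invRev hA), lcp_nil_right, invRev_length]
      simp
  | a :: A', b :: B', hA, hB => by
      by_cases hab : a = b
      · subst hab
        have hstep : Red.Step (invRev A' ++ ((a.1, !a.2) :: a :: B'))
            (invRev A' ++ B') := by
          have h0 := @Red.Step.not γ (invRev A') B' a.1 (!a.2)
          simpa [Bool.not_not] using h0
        have he : FreeGroup.reduce (invRev (a :: A') ++ a :: B')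
            = FreeGroup.reduce (invRev A' ++ B') := by
          rw [invRev_cons, List.append_assoc, List.singleton_append]
          exact reduce.Step.eq hstep
        rw [he, lcp_cons, if_pos rfl]
        have h1 := reduce_word_lemma A' (B := B') hA.tail hB.tail
        simp only [List.length_cons]
        omega
      · have hred : Reduced (invRev (a :: A') ++ b :: B') := by
          refine List.isChain_append.mpr ⟨reduced_invRev hA, hB, ?_⟩
          intro x hx y hy
          rw [invRev_cons, List.getLast?_concat] at hx
          simp only [List.head?_cons, Option.mem_def, Option.some.injEq] at hx hy
          subst hx; subst hy
          rintro ⟨h1, h2⟩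
          exact hab (Prod.ext h1 (Bool.not_inj h2))
        rw [reduce_eq_self hred, lcp_cons, if_neg hab]
        simp [invRev_length]

lemma LCP (x y : FreeGroup γ) :
    norm (x⁻¹ * y) + 2 * lcp (toWord x) (toWord y) = norm x + norm y := by
  have h := reduce_word_lemma (toWord x) (reduced_toWord x) (reduced_toWord y)
  have hxy : x⁻¹ * y = mk (invRev (toWord x) ++ toWord y) := by
    conv_lhs => rw [← mk_toWord (x := x), ← mk_toWord (x := y)]
    rw [inv_mk, mul_mk]
  rw [hxy]
  show (toWord (mk _)).length + _ = _
  rw [toWord_mk]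
  exact h

lemma d_comm (x y : FreeGroup γ) : norm (x⁻¹ * y) = norm (y⁻¹ * x) := by
  rw [← norm_inv_eq (x := x⁻¹ * y)]; rw [mul_inv_rev, inv_inv]

lemma d_tri (x y z : FreeGroup γ) : norm (x⁻¹ * z) ≤ norm (x⁻¹ * y) + norm (y⁻¹ * z) := by
  have : x⁻¹ * z = (x⁻¹ * y) * (y⁻¹ * z) := by group
  rw [this]; exact norm_mul_le _ _

lemma nm_le_nm_add_d (x y : FreeGroup γ) : norm y ≤ norm x + norm (x⁻¹ * y) := by
  have : y = x * (x⁻¹ * y) := by group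
  conv_lhs => rw [this]
  exact norm_mul_le _ _

lemma P_ultra (x y z : FreeGroup γ) :
    min (lcp (toWord x) (toWord z)) (lcp (toWord y) (toWord z)) ≤ lcp (toWord x) (toWord y) := by
  have := lcp_ultra (toWord x) (toWord z) (toWord y)
  rwa [lcp_comm (toWord z) (toWord y)] at this

lemma lip_P (x y z : FreeGroup γ) :
    lcp (toWord x) (toWord z) ≤ lcp (toWord y) (toWord z) + 2 * norm (x⁻¹ * y) := by
  have e1 := LCP x z
  have e2 := LCP y z
  have t1 := d_tri y x z
  have t2 := nm_le_nm_add_d y x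
  rw [d_comm y x] at t1 t2
  omega

lemma SB (x y z : FreeGroup γ)
    (hne : lcp (toWord x) (toWord z) ≠ lcp (toWord y) (toWord z)) :
    norm x + norm y ≤ norm (x⁻¹ * y) + lcp (toWord x) (toWord z) + lcp (toWord y) (toWord z) := by
  have exy := LCP x y
  have u1 := lcp_ultra (toWord x) (toWord y) (toWord z)
  have u2 := lcp_ultra (toWord y) (toWord x) (toWord z)
  rw [lcp_comm (toWord y) (toWord x)] at u2
  omega

lemma hom_lip {δ : Type} [DecidableEq δ] (f : FreeGroup γ →* FreeGroup δ) (Lc : ℕ)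
    (h : ∀ c : γ, norm (f (of c)) ≤ Lc) : ∀ g, norm (f g) ≤ Lc * norm g := by
  have single : ∀ c : γ × Bool, norm (f (mk [c])) ≤ Lc := by
    rintro ⟨a, b⟩
    cases b
    · have h1 : (mk [(a, false)] : FreeGroup γ) = (mk [(a, true)])⁻¹ := by
        rw [inv_mk]; rfl
      have h2 : (mk [(a, true)] : FreeGroup γ) = of a := rfl
      rw [h1, h2, _root_.map_inv, norm_inv_eq]; exact h a
    · exact h a
  have aux : ∀ l : List (γ × Bool), norm (f (mk l)) ≤ Lc * l.length := by
    intro l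
    induction l with
    | nil =>
      have : (mk [] : FreeGroup γ) = 1 := by rw [one_eq_mk]
      simp [this]
    | cons c t ih =>
      have : (mk (c :: t) : FreeGroup γ) = mk [c] * mk t := by rw [mul_mk]; rfl
      rw [this, _root_.map_mul]
      calc norm (f (mk [c]) * f (mk t)) ≤ norm (f (mk [c])) + norm (f (mk t)) := norm_mul_le _ _
        _ ≤ Lc + Lc * t.length := Nat.add_le_add (single c) ih
        _ = Lc * (c :: t).length := by rw [List.length_cons]; ring
  intro g
  calc norm (f g) = norm (f (mk (toWord g))) := by rw [mk_toWord]
    _ ≤ Lc * (toWord g).length := aux _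
    _ = Lc * norm g := rfl

lemma chain_main (mm : ℕ → FreeGroup γ) (N n K Lc : ℕ)
    (hn : n ≤ N) (h0 : mm 0 = 1)
    (ha : ∀ i, i < N → norm ((mm i)⁻¹ * mm (i+1)) ≤ K)
    (hb : ∀ i k, i ≤ k → k ≤ N → k - i ≤ Lc * norm ((mm i)⁻¹ * mm k)) :
    norm (mm n) ≤ lcp (toWord (mm n)) (toWord (mm N)) + (K + 3 * (K * (Lc * (6 * K)))) := by
  by_cases hdn : norm (mm n) ≤ lcp (toWord (mm n)) (toWord (mm N)) + K
  · exact le_trans hdn (Nat.add_le_add_left (Nat.le_add_right K _) _)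
  push_neg at hdn
  have hchain : ∀ j k, j ≤ k → k ≤ N → norm ((mm j)⁻¹ * mm k) ≤ K * (k - j) := by
    intro j k hjk hkN
    induction k, hjk using Nat.le_induction with
    | base => simp
    | succ k hjk ih =>
      have h1 : norm ((mm j)⁻¹ * mm (k+1)) ≤ norm ((mm j)⁻¹ * mm k) + norm ((mm k)⁻¹ * mm (k+1)) :=
        d_tri _ _ _
      have h2 := ha k (by omega)
      have h3 := ih (by omega)
      have h4 : k + 1 - j = (k - j) + 1 := by omega
      rw [h4, Nat.mul_succ]
      omega
  -- last shallow index ≤ n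
  set j := Nat.findGreatest (fun i => norm (mm i) ≤ lcp (toWord (mm i)) (toWord (mm N)) + K) n
    with hjdef
  have hQ0 : norm (mm 0) ≤ lcp (toWord (mm 0)) (toWord (mm N)) + K := by
    rw [h0, FreeGroup.norm_one]; exact Nat.zero_le _
  have hjQ : norm (mm j) ≤ lcp (toWord (mm j)) (toWord (mm N)) + K := by
    rw [hjdef]
    exact Nat.findGreatest_spec (P := fun i => norm (mm i) ≤ lcp (toWord (mm i)) (toWord (mm N)) + K) (Nat.zero_le n) hQ0
  have hjn : j ≤ n := by rw [hjdef]; exact Nat.findGreatest_le n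
  have hjdeep : ∀ k, j < k → k ≤ n →
      lcp (toWord (mm k)) (toWord (mm N)) + K < norm (mm k) := by
    intro k h1 h2
    rw [hjdef] at h1
    have h3 := Nat.findGreatest_is_greatest (P := fun i =>
      norm (mm i) ≤ lcp (toWord (mm i)) (toWord (mm N)) + K) h1 h2
    omega
  -- first shallow index ≥ n
  have hNmem : n ≤ N ∧ N ≤ N ∧ norm (mm N) ≤ lcp (toWord (mm N)) (toWord (mm N)) + K := by
    refine ⟨hn, le_refl N, ?_⟩
    rw [lcp_self]
    exact Nat.le_add_right _ _
  set j' := sInf {i : ℕ | n ≤ i ∧ i ≤ N ∧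
      norm (mm i) ≤ lcp (toWord (mm i)) (toWord (mm N)) + K} with hj'def
  have hj'mem : j' ∈ {i : ℕ | n ≤ i ∧ i ≤ N ∧
      norm (mm i) ≤ lcp (toWord (mm i)) (toWord (mm N)) + K} := by
    rw [hj'def]
    exact Nat.sInf_mem ⟨N, hNmem⟩
  obtain ⟨hnj', hj'N, hj'Q⟩ := hj'mem
  have hnltj' : n < j' := by
    rcases Nat.lt_or_ge n j' with h | h
    · exact h
    · exfalso
      have hh : j' = n := Nat.le_antisymm h hnj'
      rw [hh] at hj'Q
      omega
  have hj'deep : ∀ k, n ≤ k → k < j' →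
      lcp (toWord (mm k)) (toWord (mm N)) + K < norm (mm k) := by
    intro k h1 h2
    by_contra hc
    push_neg at hc
    rw [hj'def] at h2
    exact Nat.notMem_of_lt_sInf h2 ⟨h1, by omega, hc⟩
  have hdeepI : ∀ k, j < k → k < j' →
      lcp (toWord (mm k)) (toWord (mm N)) + K < norm (mm k) := by
    intro k h1 h2
    rcases le_or_gt k n with h | h
    · exact hjdeep k h1 h
    · exact hj'deep k (Nat.le_of_lt h) h2
  have hjj' : j < j' := lt_of_le_of_lt hjn hnltj'
  -- lcp is constant on the deep interval
  have hconst : ∀ k, j + 1 ≤ k → k < j' →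
      lcp (toWord (mm k)) (toWord (mm N)) = lcp (toWord (mm (j+1))) (toWord (mm N)) := by
    intro k hk1 hk2
    induction k, hk1 using Nat.le_induction with
    | base => rfl
    | succ k hk ih =>
      have ihh := ih (by omega)
      have hd1 := ha k (by omega)
      have hdk := hdeepI k (by omega) (by omega)
      have hdk1 := hdeepI (k+1) (by omega) (by omega)
      by_contra hne
      have hne' : lcp (toWord (mm k)) (toWord (mm N)) ≠
          lcp (toWord (mm (k+1))) (toWord (mm N)) := by omega
      have hSB := SB (mm k) (mm (k+1)) (mm N) hne'
      omega
  -- distance between the endpoints of the deep interval is small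
  have hdjj' : norm ((mm j)⁻¹ * mm j') ≤ 6 * K := by
    rcases Nat.lt_or_ge (j + 1) j' with hcase | hcase
    · have e1 := LCP (mm j) (mm j')
      have u := P_ultra (mm j) (mm j') (mm N)
      have b1 := lip_P (mm j) (mm (j+1)) (mm N)
      have b2 := lip_P (mm (j+1)) (mm j) (mm N)
      rw [d_comm (mm (j+1)) (mm j)] at b2
      have hd1 := ha j (by omega)
      have b3 := lip_P (mm j') (mm (j'-1)) (mm N)
      rw [d_comm (mm j') (mm (j'-1))] at b3
      have b4 := lip_P (mm (j'-1)) (mm j') (mm N)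
      have hd2' := ha (j'-1) (by omega)
      have hj'e : j' - 1 + 1 = j' := by omega
      rw [hj'e] at hd2'
      have hc1 := hconst (j'-1) (by omega) (by omega)
      omega
    · have hh : j' = j + 1 := by omega
      rw [hh]
      exact le_trans (ha j (by omega)) (by omega)
  -- conclude
  have hlen := hb j j' (Nat.le_of_lt hjj') hj'N
  have hnj6 : n - j ≤ Lc * (6 * K) :=
    le_trans (by omega : n - j ≤ j' - j) (le_trans hlen (Nat.mul_le_mul_left Lc hdjj'))
  have hdn' := hchain j n hjn hn
  have hDb : norm ((mm j)⁻¹ * mm n) ≤ K * (Lc * (6 * K)) :=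
    le_trans hdn' (Nat.mul_le_mul_left K hnj6)
  have hnm := nm_le_nm_add_d (mm j) (mm n)
  have hlp := lip_P (mm j) (mm n) (mm N)
  calc norm (mm n) ≤ norm (mm j) + norm ((mm j)⁻¹ * mm n) := hnm
    _ ≤ (lcp (toWord (mm j)) (toWord (mm N)) + K) + norm ((mm j)⁻¹ * mm n) :=
        Nat.add_le_add_right hjQ _
    _ ≤ lcp (toWord (mm n)) (toWord (mm N)) + (K + 3 * norm ((mm j)⁻¹ * mm n)) := by omega
    _ ≤ lcp (toWord (mm n)) (toWord (mm N)) + (K + 3 * (K * (Lc * (6 * K)))) :=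
        Nat.add_le_add_left (Nat.add_le_add_left (Nat.mul_le_mul_left 3 hDb) K) _

lemma bcc_exists {α β : Type} [Fintype α] [Fintype β] [DecidableEq α] [DecidableEq β]
    (e : FreeGroup β ≃* FreeGroup α) :
    ∃ C : ℕ, ∀ w w' : FreeGroup α,
      (toWord w).length + (toWord w').length = (toWord (w * w')).length →
      norm (e.symm w) + norm (e.symm w') ≤ norm (e.symm (w * w')) + 2 * C := by
  classical
  set K := Finset.univ.sup (fun a : α => norm (e.symm (of a))) with hK
  set Lc := Finset.univ.sup (fun b : β => norm (e (of b))) with hL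
  set C := K + 3 * (K * (Lc * (6 * K))) with hC
  refine ⟨C, ?_⟩
  intro w w' hlen
  set W := toWord w ++ toWord w' with hW
  set n := (toWord w).length with hn
  set N := W.length with hN
  have hnN : n ≤ N := by rw [hN, hW, List.length_append]; exact Nat.le_add_right _ _
  have hmkW : mk W = w * w' := by rw [hW, ← mul_mk, mk_toWord, mk_toWord]
  have hWw : toWord (w * w') = W := by
    have h1 : toWord (w * w') = FreeGroup.reduce W := by rw [← hmkW, toWord_mk]
    have h2 : FreeGroup.reduce W <+ W := Red.sublist reduce.red
    have h3 : (FreeGroup.reduce W).length = W.length := by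
      rw [← h1, hW, List.length_append]
      omega
    exact h1.trans (h2.eq_of_length h3)
  have hWred : Reduced W := by rw [← hWw]; exact reduced_toWord _
  set mm : ℕ → FreeGroup β := fun i => e.symm (mk (W.take i)) with hmm
  have hm0 : mm 0 = 1 := by
    simp only [hmm, List.take_zero, ← one_eq_mk, _root_.map_one]
  have hseg : ∀ i k, i ≤ k → (mm i)⁻¹ * mm k = e.symm (mk ((W.take k).drop i)) := by
    intro i k hik
    have h1 : (W.take k).take i = W.take i := by
      rw [List.take_take, min_eq_left hik]
    have h2 : mk (W.take k) = mk (W.take i) * mk ((W.take k).drop i) := by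
      rw [mul_mk]
      conv_lhs => rw [← List.take_append_drop i (W.take k), h1]
    simp only [hmm]
    rw [← _root_.map_inv, ← _root_.map_mul]
    congr 1
    rw [h2]
    group
  have hsingle : ∀ c : α × Bool, norm (e.symm (mk [c])) ≤ K := by
    rintro ⟨a, b⟩
    cases b
    · have h1 : (mk [(a, false)] : FreeGroup α) = (mk [(a, true)])⁻¹ := by
        rw [inv_mk]; rfl
      have h2 : (mk [(a, true)] : FreeGroup α) = of a := rfl
      rw [h1, h2, _root_.map_inv, norm_inv_eq, hK]
      exact Finset.le_sup (f := fun a : α => norm (e.symm (of a))) (Finset.mem_univ a)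
    · show norm (e.symm (of a)) ≤ K
      rw [hK]
      exact Finset.le_sup (f := fun a : α => norm (e.symm (of a))) (Finset.mem_univ a)
  have ha : ∀ i, i < N → norm ((mm i)⁻¹ * mm (i+1)) ≤ K := by
    intro i hiN
    rw [hseg i (i+1) (by omega)]
    have hiW : i < W.length := hN ▸ hiN
    have h1 : (W.take (i+1)).drop i = [W[i]] := by
      rw [List.drop_take]
      have h5 : i + 1 - i = 1 := by omega
      rw [h5, List.drop_eq_getElem_cons hiW]
      rfl
    rw [h1]
    exact hsingle _
  have hbee : ∀ g : FreeGroup β, norm (e g) ≤ Lc * norm g :=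
    hom_lip e.toMonoidHom Lc (fun b => by
      rw [hL]; exact Finset.le_sup (f := fun b : β => norm (e (of b))) (Finset.mem_univ b))
  have hb : ∀ i k, i ≤ k → k ≤ N → k - i ≤ Lc * norm ((mm i)⁻¹ * mm k) := by
    intro i k hik hkN
    have hred : Reduced ((W.take k).drop i) := List.IsChain.drop (List.IsChain.take hWred k) i
    have hlen2 : ((W.take k).drop i).length = k - i := by
      rw [List.length_drop, List.length_take]
      omega
    have h2 : norm (e ((mm i)⁻¹ * mm k)) = k - i := by
      rw [hseg i k hik, MulEquiv.apply_symm_apply]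
      show (toWord (mk _)).length = _
      rw [toWord_mk_reduced hred, hlen2]
    calc k - i = norm (e ((mm i)⁻¹ * mm k)) := h2.symm
      _ ≤ Lc * norm ((mm i)⁻¹ * mm k) := hbee _
  have hmain := chain_main mm N n K Lc hnN hm0 ha hb
  have hwn : mm n = e.symm w := by
    simp only [hmm]
    congr 1
    rw [hn, hW, List.take_left]
    exact mk_toWord
  have hwN : mm N = e.symm (w * w') := by
    simp only [hmm]
    rw [hN, List.take_length, hmkW]
  have hw' : e.symm w' = (mm n)⁻¹ * mm N := by
    rw [hwn, hwN, ← _root_.map_inv, ← _root_.map_mul]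
    congr 1
    group
  have hlcp := LCP (mm n) (mm N)
  rw [← hwn, hw', ← hwN]
  omega

lemma cyclic_decomp_aux : ∀ (fuel : ℕ) (L : List (γ × Bool)), L.length ≤ fuel → Reduced L →
    ∃ Z X : List (γ × Bool), L = Z ++ X ++ invRev Z ∧ CyclRedWord X ∧
      Reduced (Z ++ (X ++ X) ++ invRev Z) ∧
      (Z ++ (X ++ X) ++ invRev Z).head? = L.head? ∧
      (Z ++ (X ++ X) ++ invRev Z).getLast? = L.getLast? := by
  intro fuel
  induction fuel with
  | zero =>
    intro L hlen _
    have hLnil : L = [] := List.length_eq_zero_iff.mp (Nat.le_zero.mp hlen)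
    subst hLnil
    refine ⟨[], [], by simp [invRev], ?_, List.isChain_nil, rfl, rfl⟩
    intro p q hp _
    simp at hp
  | succ fuel ih =>
    intro L hlen hL
    rcases L with _ | ⟨a, t⟩
    · refine ⟨[], [], by simp [invRev], ?_, List.isChain_nil, rfl, rfl⟩
      intro p q hp _
      simp at hp
    have htL : (a :: t).getLast? = some ((a :: t).getLast (by simp)) :=
      List.getLast?_eq_getLast _
    set q := (a :: t).getLast (by simp) with hqdef
    by_cases hc : q.1 = a.1 ∧ q.2 = !a.2
    · -- not cyclically reduced : peel off the outer pair
      have htne : t ≠ [] := by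
        intro h
        subst h
        have hqa' : q = a := rfl
        rw [hqa'] at hc
        rcases a with ⟨a1, b⟩
        cases b <;> simp_all
      have hqt : q = t.getLast htne := by
        rw [hqdef]
        exact List.getLast_cons htne
      have hqa : q = (a.1, !a.2) := Prod.ext hc.1 hc.2
      set M := t.dropLast with hMdef
      have htsplit : t = M ++ [q] := by
        rw [hqt, hMdef]
        exact (List.dropLast_append_getLast htne).symm
      have hMred : Reduced M := (List.IsChain.tail hL).prefix (List.dropLast_prefix t)
      have hMlen : M.length ≤ fuel := by
        have h1 : M.length = t.length - 1 := by rw [hMdef, List.length_dropLast]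
        have h2 : t.length + 1 ≤ fuel + 1 := by simpa using hlen
        omega
      obtain ⟨Z', X, hdec, hcyc, hredD, hh, hgl⟩ := ih M hMlen hMred
      have hLr : Reduced (a :: (M ++ [q])) := by
        rw [← htsplit]
        exact hL
      have hcons := List.isChain_cons.mp hLr
      have hjunc := (List.isChain_append.mp hcons.2).2.2
      have hMne : M ≠ [] := by
        intro h
        have hRdaq : Rd a q := hcons.1 q (by rw [h]; rfl)
        apply hRdaq
        rw [hqa]
        exact ⟨rfl, by simp⟩
      rcases hM : M with _ | ⟨m0, M0⟩
      · exact absurd hM hMne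
      rw [hM] at hcons hjunc hh hgl hdec htsplit
      have hRd_am0 : Rd a m0 := hcons.1 m0 rfl
      rcases hD : Z' ++ (X ++ X) ++ invRev Z' with _ | ⟨d0, D0⟩
      · rw [hD] at hh
        simp at hh
      rw [hD] at hredD hh hgl
      have hd0 : d0 = m0 := by
        rw [List.head?_cons, List.head?_cons, Option.some_inj] at hh
        exact hh
      refine ⟨a :: Z', X, ?_, hcyc, ?_, ?_, ?_⟩
      · rw [htsplit, hdec, invRev_cons, ← hqa]
        simp [List.append_assoc]
      · have hshape : (a :: Z') ++ (X ++ X) ++ invRev (a :: Z')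
            = a :: ((d0 :: D0) ++ [q]) := by
          rw [invRev_cons, ← hqa, ← hD]
          simp [List.append_assoc]
        rw [hshape]
        refine List.isChain_cons.mpr ⟨?_, List.isChain_append.mpr
          ⟨hredD, List.isChain_singleton q, ?_⟩⟩
        · intro y hy
          simp only [List.cons_append, List.head?_cons, Option.mem_def, Option.some_inj] at hy
          rw [← hy, hd0]
          exact hRd_am0
        · intro x hx y hy
          simp only [List.head?_cons, Option.mem_def, Option.some_inj] at hy
          rw [hgl] at hx
          have := hjunc x hx q rfl
          rw [← hy]
          exact this
      · have hshape : (a :: Z') ++ (X ++ X) ++ invRev (a :: Z')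
            = a :: ((d0 :: D0) ++ [q]) := by
          rw [invRev_cons, ← hqa, ← hD]
          simp [List.append_assoc]
        rw [hshape]
        rfl
      · have hshape : (a :: Z') ++ (X ++ X) ++ invRev (a :: Z')
            = (a :: (d0 :: D0)) ++ [q] := by
          rw [invRev_cons, ← hqa, ← hD]
          simp [List.append_assoc]
        rw [hshape, List.getLast?_concat, htL]
      -- done with peel case
    · -- already cyclically reduced
      have hsimp : ([] : List (γ × Bool)) ++ ((a :: t) ++ (a :: t)) ++ invRev []
          = (a :: t) ++ (a :: t) := by simp [invRev]
      refine ⟨[], a :: t, by simp [invRev], ?_, ?_, ?_, ?_⟩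
      · intro p q' hp hq'
        rw [List.head?_cons, Option.some_inj] at hp
        rw [htL, Option.some_inj] at hq'
        subst hp
        subst hq'
        exact hc
      · rw [hsimp]
        refine List.isChain_append.mpr ⟨hL, hL, ?_⟩
        intro x hx y hy
        simp only [List.head?_cons, Option.mem_def, Option.some_inj] at hy
        rw [Option.mem_def, htL, Option.some_inj] at hx
        subst hx
        subst hy
        exact hc
      · rw [hsimp]
        rfl
      · rw [hsimp, List.getLast?_append_cons]

end BCC7

/-- Word length with respect to the basis `ℬ`, given by the isomorphism `e`. -/
def lenB {α β : Type} [DecidableEq β] (e : FreeGroup β ≃* FreeGroup α)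
    (w : FreeGroup α) : ℕ :=
  (FreeGroup.toWord (e.symm w)).length

/-- The bounded cancellation constant `BCC(𝒜,ℬ)`: the least `C` satisfying the
bounded cancellation lemma for the bases `𝒜` and `ℬ`. -/
noncomputable def BCC {α β : Type} [DecidableEq α] [DecidableEq β]
    (e : FreeGroup β ≃* FreeGroup α) : ℕ :=
  sInf {C : ℕ | ∀ w w' : FreeGroup α,
    (FreeGroup.toWord w).length + (FreeGroup.toWord w').length
        = (FreeGroup.toWord (w * w')).length →
    lenB e w + lenB e w' ≤ lenB e (w * w') + 2 * C}

open FreeGroup BCC7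

/-- A word that is cyclically reduced with respect to `𝒜` is, with respect to another
basis `ℬ`, conjugate to a `ℬ`-cyclically reduced word by an element of `ℬ`-length at
most `BCC(𝒜,ℬ)`. -/
theorem stmt7 {α β : Type} [Fintype α] [Fintype β] [DecidableEq α] [DecidableEq β]
    (e : FreeGroup β ≃* FreeGroup α) (w : FreeGroup α)
    (hw : CyclRedWord (FreeGroup.toWord w)) :
    ∃ z x : FreeGroup α, w = z * x * z⁻¹ ∧
      CyclRedWord (FreeGroup.toWord (e.symm x)) ∧ lenB e z ≤ BCC e := by
  classical
  set v := e.symm w with hv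
  obtain ⟨Z, X, hdec, hX, hredD, hh, hl⟩ :=
    cyclic_decomp_aux (toWord v).length (toWord v) le_rfl (reduced_toWord v)
  have hZred : Reduced Z := (reduced_toWord v).prefix ⟨X ++ invRev Z, by
    rw [hdec, List.append_assoc]⟩
  have hXred : Reduced X := (reduced_toWord v).infix ⟨Z, invRev Z, by rw [hdec]⟩
  have hvfact : v = mk Z * mk X * (mk Z)⁻¹ := by
    rw [inv_mk, mul_mk, mul_mk, ← hdec, mk_toWord]
  refine ⟨e (mk Z), e (mk X), ?_, ?_, ?_⟩
  · rw [← _root_.map_inv, ← _root_.map_mul, ← _root_.map_mul, ← hvfact, hv,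
      MulEquiv.apply_symm_apply]
  · rw [MulEquiv.symm_apply_apply, toWord_mk_reduced hXred]
    exact hX
  · have hlen1 : lenB e (e (mk Z)) = Z.length := by
      show (toWord (e.symm (e (mk Z)))).length = Z.length
      rw [MulEquiv.symm_apply_apply, toWord_mk_reduced hZred]
    rw [hlen1]
    -- the set of bounded cancellation constants
    set S : Set ℕ := {C : ℕ | ∀ w w' : FreeGroup α,
      (FreeGroup.toWord w).length + (FreeGroup.toWord w').length
          = (FreeGroup.toWord (w * w')).length →
      lenB e w + lenB e w' ≤ lenB e (w * w') + 2 * C} with hS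
    have hBCC : BCC e = sInf S := rfl
    obtain ⟨C0, hC0⟩ := bcc_exists e
    have hC0S : C0 ∈ S := hC0
    have hmem : sInf S ∈ S := Nat.sInf_mem ⟨C0, hC0S⟩
    -- w * w has no cancellation since w is cyclically reduced
    have hjred : Reduced (toWord w ++ toWord w) := by
      refine List.isChain_append.mpr ⟨reduced_toWord w, reduced_toWord w, ?_⟩
      intro x hx y hy
      exact hw y x hy hx
    have hww : toWord (w * w) = toWord w ++ toWord w := by
      have h1 : w * w = mk (toWord w ++ toWord w) := by
        rw [← mul_mk, mk_toWord]
      rw [h1, toWord_mk_reduced hjred]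
    have hkey := hmem w w (by rw [hww, List.length_append])
    -- compute the two lengths
    have hlw : lenB e w = Z.length + X.length + Z.length := by
      show (toWord (e.symm w)).length = _
      rw [← hv, hdec]
      simp [invRev_length]
      omega
    have hlww : lenB e (w * w) = Z.length + (X.length + X.length) + Z.length := by
      show (toWord (e.symm (w * w))).length = _
      have h1 : e.symm (w * w) = v * v := by rw [hv, _root_.map_mul]
      have h2 : v * v = mk (Z ++ (X ++ X) ++ invRev Z) := by
        rw [hvfact]
        have : mk Z * mk X * (mk Z)⁻¹ * (mk Z * mk X * (mk Z)⁻¹)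
            = mk Z * (mk X * mk X) * (mk Z)⁻¹ := by group
        rw [this, mul_mk, inv_mk, mul_mk, mul_mk]
      rw [h1, h2, toWord_mk_reduced hredD]
      simp [invRev_length]
      omega
    rw [hlw, hlww] at hkey
    rw [hBCC]
    omega
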